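/- Let f : ℝ → ℝ be continuous, and let Ω : ℝ × ℝ → ℝ be continuously differentiable with Ω(x,x) = 0 for all x and VE(Ω) = f, i.e., ∂_y Ω(x,y)|_{y=x} = f(x) for all x. Let a < b. Then for every ε > 0 there exists δ > 0 such that for every partition a = x_0 < x_1 < ⋯ < x_k = b with mesh max_i (x_{i+1} − x_i) < δ, one has |Σ_{i=0}^{k−1} Ω(x_i, x_{i+1}) − ∫_a^b f(x) dx| < ε. In particular the Riemann-like sums Σ_i Ω(x_i,x_{i+1}) converge to ∫_a^b f as the mesh tends to 0. -/

import Mathlib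

open scoped BigOperators

/-- one-dimensional Part 0 of the main theorem. If `f` is continuous and
`Ω : ℝ × ℝ → ℝ` is a continuously differentiable normalized `1`-cochain with `VE(Ω) = f`
(i.e. `Ω(x,x) = 0` and `∂_y Ω(x,y)|_{y=x} = f(x)`), then for `a < b` the Riemann-like sums
`Σ_i Ω(x_i, x_{i+1})` over partitions of `[a,b]` converge to `∫_a^b f` as the mesh tends to `0`. -/
theorem riemann_like_sums_converge_to_integral
    (f : ℝ → ℝ) (hf : Continuous f)
    (Ω : ℝ × ℝ → ℝ) (hΩ : ContDiff ℝ 1 Ω)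
    (hdiag : ∀ x : ℝ, Ω (x, x) = 0)
    (hVE : ∀ x : ℝ, deriv (fun y => Ω (x, y)) x = f x)
    (a b : ℝ) (hab : a < b) :
    ∀ ε > 0, ∃ δ > 0, ∀ (k : ℕ) (x : Fin (k + 1) → ℝ),
      StrictMono x → x 0 = a → x (Fin.last k) = b →
      (∀ i : Fin k, x i.succ - x i.castSucc < δ) →
      |(∑ i : Fin k, Ω (x i.castSucc, x i.succ)) - ∫ t in a..b, f t| < ε := by
  intro ε hε
  set F : ℝ × ℝ → ℝ := fun p => fderiv ℝ Ω p (0, 1) with hFdef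
  have hΩd : Differentiable ℝ Ω := hΩ.differentiable one_ne_zero
  have hFd : ∀ x y : ℝ, HasDerivAt (fun y => Ω (x, y)) (F (x, y)) y := by
    intro x y
    have h2 : HasDerivAt (fun y : ℝ => ((x : ℝ), y)) ((0 : ℝ), (1 : ℝ)) y :=
      (hasDerivAt_const y x).prodMk (hasDerivAt_id y)
    exact (hΩd (x, y)).hasFDerivAt.comp_hasDerivAt y h2
  have hFcont : Continuous F :=
    (hΩ.continuous_fderiv one_ne_zero).clm_apply continuous_const
  have hFf : ∀ t : ℝ, F (t, t) = f t := fun t => ((hFd t t).deriv).symm.trans (hVE t)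
  have hba : (0 : ℝ) < b - a := sub_pos.mpr hab
  set ε' := ε / (2 * (b - a)) with hε'def
  have hε' : 0 < ε' := div_pos hε (by linarith)
  have hK : IsCompact ((Set.Icc a b) ×ˢ (Set.Icc a b)) := isCompact_Icc.prod isCompact_Icc
  have hUC : UniformContinuousOn F ((Set.Icc a b) ×ˢ (Set.Icc a b)) :=
    hK.uniformContinuousOn_of_continuous hFcont.continuousOn
  obtain ⟨δ, hδ, hδ'⟩ := Metric.uniformContinuousOn_iff.mp hUC ε' hε'
  refine ⟨δ, hδ, ?_⟩
  intro k x hmono h0 hlast hmesh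
  set y : ℕ → ℝ := fun n => x ⟨min n k, Nat.lt_succ_of_le (min_le_right n k)⟩ with hydef
  have hyc : ∀ i : Fin k, y (i : ℕ) = x i.castSucc := by
    intro i
    simp only [hydef]
    congr 1
    ext
    simp [Nat.min_eq_left (le_of_lt i.isLt)]
  have hys : ∀ i : Fin k, y ((i : ℕ) + 1) = x i.succ := by
    intro i
    simp only [hydef]
    congr 1
    ext
    simp [Nat.min_eq_left i.isLt]
  have hy0 : y 0 = a := by
    simp only [hydef]
    rw [← h0]
    congr 1
  have hyk : y k = b := by
    simp only [hydef]
    rw [← hlast]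
    congr 1
    ext
    simp [Fin.last]
  have hymono : Monotone y := by
    intro m n hmn
    exact hmono.monotone (by simp [Fin.mk_le_mk]; omega)
  have hymem : ∀ n, y n ∈ Set.Icc a b := by
    intro n
    constructor
    · rw [← h0]; exact hmono.monotone (Fin.zero_le _)
    · rw [← hlast]; exact hmono.monotone (Fin.le_last _)
  have hint : ∀ c d : ℝ, IntervalIntegrable f MeasureTheory.volume c d :=
    fun c d => hf.intervalIntegrable c d
  have hsplit : ∑ i ∈ Finset.range k, ∫ t in y i..y (i + 1), f t = ∫ t in a..b, f t := by
    rw [← hy0, ← hyk]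
    exact intervalIntegral.sum_integral_adjacent_intervals (fun i _ => hint _ _)
  have hFc2 : ∀ c : ℝ, Continuous fun t => F (c, t) := fun c =>
    hFcont.comp (continuous_const.prodMk continuous_id)
  have hFTC : ∀ c d : ℝ, Ω (c, d) = ∫ t in c..d, F (c, t) := by
    intro c d
    have h := intervalIntegral.integral_eq_sub_of_hasDerivAt
      (f := fun t => Ω (c, t)) (f' := fun t => F (c, t))
      (fun t _ => hFd c t) ((hFc2 c).intervalIntegrable c d)
    simp only [h]
    rw [hdiag c, sub_zero]
  have key : (∑ i : Fin k, Ω (x i.castSucc, x i.succ)) - ∫ t in a..b, f t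
      = ∑ i ∈ Finset.range k, ∫ t in y i..y (i + 1), (F (y i, t) - f t) := by
    have h1 : (∑ i : Fin k, Ω (x i.castSucc, x i.succ))
        = ∑ i ∈ Finset.range k, Ω (y i, y (i + 1)) := by
      rw [← Fin.sum_univ_eq_sum_range (fun n => Ω (y n, y (n + 1)))]
      exact Finset.sum_congr rfl fun i _ => by rw [hyc i, hys i]
    rw [h1, ← hsplit, ← Finset.sum_sub_distrib]
    refine Finset.sum_congr rfl fun i _ => ?_
    rw [hFTC (y i) (y (i + 1)),
      intervalIntegral.integral_sub ((hFc2 (y i)).intervalIntegrable _ _) (hint _ _)]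
  have hbound : ∀ i ∈ Finset.range k,
      |∫ t in y i..y (i + 1), (F (y i, t) - f t)| ≤ ε' * (y (i + 1) - y i) := by
    intro i hi
    have hik : i < k := Finset.mem_range.mp hi
    have hle : y i ≤ y (i + 1) := hymono (Nat.le_succ i)
    have hmesh' : y (i + 1) - y i < δ := by
      have h1 := hyc ⟨i, hik⟩
      have h2 := hys ⟨i, hik⟩
      simp only [Fin.val_mk] at h1 h2
      rw [h1, h2]
      exact hmesh ⟨i, hik⟩
    have hC : ∀ t ∈ Set.uIoc (y i) (y (i + 1)), ‖F (y i, t) - f t‖ ≤ ε' := by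
      intro t ht
      rw [Set.uIoc_of_le hle] at ht
      have hty : t ∈ Set.Icc a b :=
        ⟨le_trans (hymem i).1 (le_of_lt ht.1), le_trans ht.2 (hymem (i + 1)).2⟩
      have hp : ((y i, t) : ℝ × ℝ) ∈ (Set.Icc a b) ×ˢ (Set.Icc a b) := ⟨hymem i, hty⟩
      have hq : ((t, t) : ℝ × ℝ) ∈ (Set.Icc a b) ×ˢ (Set.Icc a b) := ⟨hty, hty⟩
      have hd : dist ((y i, t) : ℝ × ℝ) ((t, t) : ℝ × ℝ) < δ := by
        rw [Prod.dist_eq]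
        have h1 : dist (y i) t < δ := by
          rw [Real.dist_eq, abs_of_nonpos (by linarith [ht.1])]
          linarith [ht.2, hmesh']
        have h2 : dist t t < δ := by simpa using hδ
        simpa using max_lt h1 h2
      have := hδ' _ hp _ hq hd
      rw [Real.dist_eq] at this
      rw [← hFf t]
      exact le_of_lt this
    calc |∫ t in y i..y (i + 1), (F (y i, t) - f t)|
        ≤ ε' * |y (i + 1) - y i| :=
          intervalIntegral.norm_integral_le_of_norm_le_const hC
      _ = ε' * (y (i + 1) - y i) := by rw [abs_of_nonneg (sub_nonneg.mpr hle)]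
  rw [key]
  calc |∑ i ∈ Finset.range k, ∫ t in y i..y (i + 1), (F (y i, t) - f t)|
      ≤ ∑ i ∈ Finset.range k, |∫ t in y i..y (i + 1), (F (y i, t) - f t)| :=
        Finset.abs_sum_le_sum_abs _ _
    _ ≤ ∑ i ∈ Finset.range k, ε' * (y (i + 1) - y i) := Finset.sum_le_sum hbound
    _ = ε' * (b - a) := by
        rw [← Finset.mul_sum, Finset.sum_range_sub y, hyk, hy0]
    _ = ε / 2 := by
        rw [hε'def]; field_simp
    _ < ε := by linarith
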